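/- Assume r and θ are nonconstant. Then the resultant R₂(t,k) = Res_s(μ, ν_k) ∈ ℝ[t,k] is nonzero and is not a constant polynomial. Moreover, if the system r(t) = −r(s), θ(t) = θ(s) + (2k+1)π admits a solution (t,s) ∈ Ω × Ω for infinitely many integers k, then R₂ has positive degree in the variable k. -/

import Mathlib

open Polynomial

noncomputable def sylGen {R : Type*} [CommRing R] (p q : Polynomial R) (np nq : ℕ) :
    Matrix (Fin (nq + np)) (Fin (nq + np)) R :=
  Matrix.of fun i j =>
    if (i : ℕ) < nq then
      (if (j : ℕ) ≤ np + (i : ℕ) then p.coeff (np + (i : ℕ) - (j : ℕ)) else 0)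
    else
      (if (j : ℕ) ≤ nq + ((i : ℕ) - nq) then
        q.coeff (nq + ((i : ℕ) - nq) - (j : ℕ)) else 0)

lemma sylGen_map {R S : Type*} [CommRing R] [CommRing S] (f : R →+* S)
    (p q : Polynomial R) (np nq : ℕ) :
    (sylGen p q np nq).map f = sylGen (p.map f) (q.map f) np nq := by
  ext i j
  simp only [Matrix.map_apply, sylGen, Matrix.of_apply]
  split_ifs <;> simp [Polynomial.coeff_map]

lemma rowSum {K : Type*} [CommRing K] (p : Polynomial K) (d N : ℕ) (hd : d < N)
    (hdeg : p.natDegree ≤ d) (x : K) :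
    ∑ j ∈ Finset.range N, (if j ≤ d then p.coeff (d - j) else 0) * x ^ (N - 1 - j)
      = x ^ (N - 1 - d) * p.eval x := by
  have h1 : ∑ j ∈ Finset.range (d+1), (if j ≤ d then p.coeff (d - j) else 0) * x ^ (N - 1 - j)
      = ∑ j ∈ Finset.range N, (if j ≤ d then p.coeff (d - j) else 0) * x ^ (N - 1 - j) := by
    apply Finset.sum_subset
    · exact Finset.range_subset_range.2 hd
    · intro j hj hj'
      simp only [Finset.mem_range] at hj hj'
      rw [if_neg (by omega), zero_mul]
  rw [← h1]
  have h2 : ∀ j ∈ Finset.range (d+1),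
      (if j ≤ d then p.coeff (d - j) else 0) * x ^ (N - 1 - j)
      = p.coeff ((d+1) - 1 - j) * x ^ (N - 1 - d + ((d+1) - 1 - j)) := by
    intro j hj
    simp only [Finset.mem_range] at hj
    rw [if_pos (by omega)]
    have e1 : d + 1 - 1 - j = d - j := by omega
    have e2 : N - 1 - d + (d + 1 - 1 - j) = N - 1 - j := by omega
    rw [e2, e1]
  rw [Finset.sum_congr rfl h2,
    Finset.sum_range_reflect (fun l => p.coeff l * x ^ (N - 1 - d + l)) (d+1)]
  have h3 : ∀ l ∈ Finset.range (d+1), p.coeff l * x ^ (N - 1 - d + l)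
      = x ^ (N - 1 - d) * (p.coeff l * x ^ l) := by
    intro l _
    rw [pow_add]; ring
  rw [Finset.sum_congr rfl h3, ← Finset.mul_sum]
  congr 1
  rw [Polynomial.eval_eq_sum_range' (n := d+1) (by omega) x]

lemma sylGen_mulVec {K : Type*} [CommRing K] {p q : Polynomial K} {np nq : ℕ}
    (hp : p.natDegree ≤ np) (hq : q.natDegree ≤ nq) (x : K) (i : Fin (nq + np)) :
    (sylGen p q np nq).mulVec (fun j => x ^ (nq + np - 1 - (j : ℕ))) i
      = if (i : ℕ) < nq then x ^ (nq + np - 1 - (np + (i : ℕ))) * p.eval x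
        else x ^ (nq + np - 1 - (nq + ((i : ℕ) - nq))) * q.eval x := by
  have key : ∀ (P : Polynomial K) (d : ℕ), d < nq + np → P.natDegree ≤ d →
      ∑ j : Fin (nq + np), (if (j : ℕ) ≤ d then P.coeff (d - (j : ℕ)) else 0)
        * x ^ (nq + np - 1 - (j : ℕ)) = x ^ (nq + np - 1 - d) * P.eval x := by
    intro P d h1 h2
    rw [Fin.sum_univ_eq_sum_range
      (fun j => (if j ≤ d then P.coeff (d - j) else 0) * x ^ (nq + np - 1 - j))]
    exact rowSum P d (nq + np) h1 h2 x
  unfold Matrix.mulVec dotProduct sylGen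
  by_cases hi : (i : ℕ) < nq
  · simp only [Matrix.of_apply, if_pos hi]
    exact key p (np + (i : ℕ)) (by omega) (by omega)
  · simp only [Matrix.of_apply, if_neg hi]
    have hiN := i.isLt
    exact key q (nq + ((i : ℕ) - nq)) (by omega) (by omega)

lemma sylGen_det_eq_zero {K : Type*} [CommRing K] [IsDomain K] {p q : Polynomial K}
    {np nq : ℕ} (hp : p.natDegree ≤ np) (hq : q.natDegree ≤ nq) (hN : 0 < nq + np)
    {x : K} (hpx : p.eval x = 0) (hqx : q.eval x = 0) :
    (sylGen p q np nq).det = 0 := by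
  rw [← Matrix.exists_mulVec_eq_zero_iff]
  refine ⟨fun j => x ^ (nq + np - 1 - (j : ℕ)), ?_, ?_⟩
  · intro h
    have h1 : x ^ (nq + np - 1 - ((⟨nq + np - 1, by omega⟩ : Fin (nq + np)) : ℕ)) = 0 :=
      congrFun h ⟨nq + np - 1, by omega⟩
    simp only [Fin.val_mk, Nat.sub_self, pow_zero] at h1
    exact one_ne_zero h1
  · funext i
    rw [sylGen_mulVec hp hq x i]
    split_ifs <;> simp [hpx, hqx]

lemma sylGen_det_ne_zero {K : Type*} [Field K] {p q : Polynomial K}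
    (hp : p ≠ 0) (hq : q ≠ 0) (h : IsCoprime p q) :
    (sylGen p q p.natDegree q.natDegree).det ≠ 0 := by
  set np := p.natDegree with hnp
  set nq := q.natDegree with hnq
  intro hdet
  obtain ⟨v, hv0, hv⟩ := (Matrix.exists_vecMul_eq_zero_iff).2 hdet
  classical
  set w : ℕ → K := fun i => if hi : i < nq + np then v ⟨i, hi⟩ else 0 with hw
  set S : Polynomial K :=
      (∑ i ∈ Finset.range nq, Polynomial.C (w i) * (p * X ^ (nq - 1 - i))) +
      (∑ i ∈ Finset.range np, Polynomial.C (w (nq + i)) * (q * X ^ (np - 1 - i))) with hS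
  have hcoeff : ∀ j : Fin (nq + np), S.coeff (nq + np - 1 - (j : ℕ)) = 0 := by
    intro j
    have hvj : Matrix.vecMul v (sylGen p q np nq) j = 0 := congrFun hv j
    rw [← hvj]
    unfold Matrix.vecMul dotProduct
    rw [Fin.sum_univ_add (f := fun i : Fin (nq + np) => v i * sylGen p q np nq i j)]
    have e1 : ∀ i : Fin nq, v (Fin.castAdd np i) * sylGen p q np nq (Fin.castAdd np i) j
        = (Polynomial.C (w (i : ℕ)) * (p * X ^ (nq - 1 - (i : ℕ)))).coeff
            (nq + np - 1 - (j : ℕ)) := by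
      intro i
      have hi : (i : ℕ) < nq := i.isLt
      have hjN : (j : ℕ) < nq + np := j.isLt
      rw [Polynomial.coeff_C_mul, Polynomial.coeff_mul_X_pow']
      have hwv : w (i : ℕ) = v (Fin.castAdd np i) := by
        simp only [hw, dif_pos (show (i : ℕ) < nq + np by omega)]
        rfl
      rw [hwv]
      congr 1
      simp only [sylGen, Matrix.of_apply, Fin.coe_castAdd, if_pos hi]
      split_ifs with h1 h2 h2
      · congr 1; omega
      · omega
      · omega
      · rfl
    have e2 : ∀ i : Fin np, v (Fin.natAdd nq i) * sylGen p q np nq (Fin.natAdd nq i) j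
        = (Polynomial.C (w (nq + (i : ℕ))) * (q * X ^ (np - 1 - (i : ℕ)))).coeff
            (nq + np - 1 - (j : ℕ)) := by
      intro i
      have hi : (i : ℕ) < np := i.isLt
      have hjN : (j : ℕ) < nq + np := j.isLt
      rw [Polynomial.coeff_C_mul, Polynomial.coeff_mul_X_pow']
      have hwv : w (nq + (i : ℕ)) = v (Fin.natAdd nq i) := by
        simp only [hw, dif_pos (show nq + (i : ℕ) < nq + np by omega)]
        rfl
      rw [hwv]
      congr 1
      simp only [sylGen, Matrix.of_apply, Fin.coe_natAdd]
      rw [if_neg (by omega)]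
      have hsub : nq + (i : ℕ) - nq = (i : ℕ) := by omega
      rw [hsub]
      split_ifs with h1 h2 h2
      · congr 1; omega
      · omega
      · omega
      · rfl
    rw [Finset.sum_congr rfl (fun i _ => e1 i), Finset.sum_congr rfl (fun i _ => e2 i)]
    rw [hS, Polynomial.coeff_add, Polynomial.finset_sum_coeff, Polynomial.finset_sum_coeff]
    congr 1
    · exact (Fin.sum_univ_eq_sum_range (fun i =>
        (Polynomial.C (w i) * (p * X ^ (nq - 1 - i))).coeff (nq + np - 1 - (j : ℕ))) nq).symm
    · exact (Fin.sum_univ_eq_sum_range (fun i =>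
        (Polynomial.C (w (nq + i)) * (q * X ^ (np - 1 - i))).coeff (nq + np - 1 - (j : ℕ))) np).symm
  have hNpos : 0 < nq + np := by
    rcases Function.ne_iff.1 hv0 with ⟨i, _⟩
    have := i.isLt; omega
  have hS0 : S = 0 := by
    ext e
    rcases le_or_gt e (nq + np - 1) with he | he
    · have heq : e = nq + np - 1 - ((nq + np - 1 - e : ℕ)) := by omega
      rw [Polynomial.coeff_zero, heq]
      exact hcoeff ⟨nq + np - 1 - e, by omega⟩
    · rw [Polynomial.coeff_zero]
      rw [hS, Polynomial.coeff_add, Polynomial.finset_sum_coeff, Polynomial.finset_sum_coeff]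
      rw [Finset.sum_eq_zero, Finset.sum_eq_zero, add_zero]
      · intro i hi
        simp only [Finset.mem_range] at hi
        apply Polynomial.coeff_eq_zero_of_natDegree_lt
        calc (Polynomial.C (w (nq + i)) * (q * X ^ (np - 1 - i))).natDegree
            ≤ (q * X ^ (np - 1 - i)).natDegree := Polynomial.natDegree_C_mul_le _ _
          _ ≤ nq + (np - 1 - i) := by
              refine le_trans (Polynomial.natDegree_mul_le) ?_
              simp [Polynomial.natDegree_X_pow, hnq]
          _ < e := by omega
      · intro i hi
        simp only [Finset.mem_range] at hi
        apply Polynomial.coeff_eq_zero_of_natDegree_lt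
        calc (Polynomial.C (w i) * (p * X ^ (nq - 1 - i))).natDegree
            ≤ (p * X ^ (nq - 1 - i)).natDegree := Polynomial.natDegree_C_mul_le _ _
          _ ≤ np + (nq - 1 - i) := by
              refine le_trans (Polynomial.natDegree_mul_le) ?_
              simp [Polynomial.natDegree_X_pow, hnp]
          _ < e := by omega
  set a : Polynomial K := ∑ i ∈ Finset.range nq, Polynomial.C (w i) * X ^ (nq - 1 - i) with ha
  set b : Polynomial K :=
      ∑ i ∈ Finset.range np, Polynomial.C (w (nq + i)) * X ^ (np - 1 - i) with hb
  have hSab : a * p + b * q = 0 := by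
    rw [← hS0, hS, ha, hb, Finset.sum_mul, Finset.sum_mul]
    exact congrArg₂ (· + ·) (Finset.sum_congr rfl (fun i _ => by ring))
      (Finset.sum_congr rfl (fun i _ => by ring))
  have hpb : p ∣ b := h.dvd_of_dvd_mul_right ⟨-a, by linear_combination hSab⟩
  have hb0 : b = 0 := by
    rcases Nat.eq_zero_or_pos np with h0 | h0
    · rw [hb, h0]; simp
    · by_contra hbne
      have hdb : b.natDegree < np := by
        have : b.natDegree ≤ np - 1 := by
          rw [hb]
          refine Polynomial.natDegree_sum_le_of_forall_le _ _ (fun i hi => ?_)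
          refine le_trans (Polynomial.natDegree_C_mul_le _ _) ?_
          simp only [Polynomial.natDegree_X_pow]
          omega
        omega
      have := Polynomial.natDegree_le_of_dvd hpb hbne
      omega
  have ha0 : a = 0 := by
    have hap : a * p = 0 := by rw [hb0] at hSab; linear_combination hSab
    rcases mul_eq_zero.1 hap with h1 | h1
    · exact h1
    · exact absurd h1 hp
  apply hv0
  funext i
  rcases lt_or_ge (i : ℕ) nq with hi | hi
  · have hvi : v i = a.coeff (nq - 1 - (i : ℕ)) := by
      rw [ha, Polynomial.finset_sum_coeff]
      rw [Finset.sum_eq_single (i : ℕ)]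
      · rw [Polynomial.coeff_C_mul, Polynomial.coeff_X_pow, if_pos rfl, mul_one]
        simp only [hw, dif_pos (show (i : ℕ) < nq + np from i.isLt)]
      · intro c hc hne
        simp only [Finset.mem_range] at hc
        rw [Polynomial.coeff_C_mul, Polynomial.coeff_X_pow, if_neg (by omega), mul_zero]
      · intro hc
        simp only [Finset.mem_range] at hc
        omega
    rw [Pi.zero_apply, hvi, ha0, Polynomial.coeff_zero]
  · have hiN := i.isLt
    have hvi : v i = b.coeff (np - 1 - ((i : ℕ) - nq)) := by
      rw [hb, Polynomial.finset_sum_coeff]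
      rw [Finset.sum_eq_single ((i : ℕ) - nq)]
      · rw [Polynomial.coeff_C_mul, Polynomial.coeff_X_pow, if_pos rfl, mul_one]
        simp only [hw, dif_pos (show nq + ((i : ℕ) - nq) < nq + np by omega)]
        congr 1
        exact Fin.ext (show (i : ℕ) = nq + ((i : ℕ) - nq) by omega)
      · intro c hc hne
        simp only [Finset.mem_range] at hc
        rw [Polynomial.coeff_C_mul, Polynomial.coeff_X_pow, if_neg (by omega), mul_zero]
      · intro hc
        simp only [Finset.mem_range] at hc
        omega
    rw [Pi.zero_apply, hvi, hb0, Polynomial.coeff_zero]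



/-- The Sylvester matrix of two polynomials p, q over a commutative ring, of size
(q.natDegree + p.natDegree): the first q.natDegree rows carry the shifted coefficient
vectors of p (written from the leading coefficient), the remaining p.natDegree rows
carry those of q. -/
noncomputable def sylvesterMatrix {R : Type*} [CommRing R] (p q : Polynomial R) :
    Matrix (Fin (q.natDegree + p.natDegree)) (Fin (q.natDegree + p.natDegree)) R :=
  Matrix.of fun i j =>
    if (i : ℕ) < q.natDegree then
      (if (j : ℕ) ≤ p.natDegree + (i : ℕ) then p.coeff (p.natDegree + (i : ℕ) - (j : ℕ)) else 0)
    else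
      (if (j : ℕ) ≤ q.natDegree + ((i : ℕ) - q.natDegree) then
        q.coeff (q.natDegree + ((i : ℕ) - q.natDegree) - (j : ℕ)) else 0)

/-- The resultant of two polynomials: the determinant of their Sylvester matrix. -/
noncomputable def resultant {R : Type*} [CommRing R] (p q : Polynomial R) : R :=
  (sylvesterMatrix p q).det

/- We work in ℝ[t,k][s]: the coefficient ring is MvPolynomial (Fin 2) ℝ with
t = X 0 and k = X 1, and s is the variable of the univariate polynomial ring. -/

/-- p(t), as a constant (in s) polynomial over ℝ[t,k]. -/
noncomputable def atT (p : Polynomial ℝ) : Polynomial (MvPolynomial (Fin 2) ℝ) :=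
  Polynomial.C (Polynomial.aeval (MvPolynomial.X 0) p)

/-- p(s), a polynomial in s over ℝ[t,k]. -/
noncomputable def atS (p : Polynomial ℝ) : Polynomial (MvPolynomial (Fin 2) ℝ) :=
  p.map (algebraMap ℝ (MvPolynomial (Fin 2) ℝ))

/-- μ(t,s) = A(t)B(s) + A(s)B(t), as a polynomial in s over ℝ[t,k]. -/
noncomputable def muS (A B : Polynomial ℝ) : Polynomial (MvPolynomial (Fin 2) ℝ) :=
  atT A * atS B + atS A * atT B

/-- ν_k(t,s) = C(t)D(s) − C(s)D(t) − (2k+1)π·D(t)D(s), as a polynomial in s over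
ℝ[t,k], with k an indeterminate (k = X 1). -/
noncomputable def nuS (C D : Polynomial ℝ) : Polynomial (MvPolynomial (Fin 2) ℝ) :=
  atT C * atS D - atS C * atT D -
    Polynomial.C ((2 * MvPolynomial.X 1 + 1) * MvPolynomial.C Real.pi) * (atT D * atS D)

/-- R₂(t,k) = Res_s(μ, ν_k) ∈ ℝ[t,k]. -/
noncomputable def res2 (A B C D : Polynomial ℝ) : MvPolynomial (Fin 2) ℝ :=
  _root_.resultant (muS A B) (nuS C D)

/- STATEMENT 9: if r and θ are nonconstant, then R₂ = Res_s(μ, ν_k) is nonzero and not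
constant; moreover, if the system r(t) = −r(s), θ(t) = θ(s) + (2k+1)π has a solution
(t,s) ∈ Ω × Ω for infinitely many integers k, then R₂ has positive degree in k. -/
lemma sylvesterMatrix_eq_sylGen {R : Type*} [CommRing R] (p q : Polynomial R) :
    sylvesterMatrix p q = sylGen p q p.natDegree q.natDegree := rfl


section Specialize

variable {S : Type*} [CommRing S] [Algebra ℝ S]

/-- μ specialized at `t`, as a polynomial in `s` over `S`. -/
noncomputable def Pmu (A B : Polynomial ℝ) (t : S) : Polynomial S :=
  Polynomial.C (Polynomial.aeval t A) * B.map (algebraMap ℝ S) +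
    A.map (algebraMap ℝ S) * Polynomial.C (Polynomial.aeval t B)

/-- ν specialized at `t`, `k`, as a polynomial in `s` over `S`. -/
noncomputable def Pnu (C D : Polynomial ℝ) (t k : S) : Polynomial S :=
  Polynomial.C (Polynomial.aeval t C) * D.map (algebraMap ℝ S) -
    C.map (algebraMap ℝ S) * Polynomial.C (Polynomial.aeval t D) -
    Polynomial.C ((2 * k + 1) * algebraMap ℝ S Real.pi) *
      (Polynomial.C (Polynomial.aeval t D) * D.map (algebraMap ℝ S))

lemma map_atT (p : Polynomial ℝ) (x : Fin 2 → S) :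
    (atT p).map (MvPolynomial.aeval x).toRingHom = Polynomial.C (Polynomial.aeval (x 0) p) := by
  rw [atT, Polynomial.map_C]
  congr 1
  have h := Polynomial.aeval_algHom_apply (MvPolynomial.aeval x) (MvPolynomial.X 0) p
  simpa using h.symm

lemma map_atS (p : Polynomial ℝ) (x : Fin 2 → S) :
    (atS p).map (MvPolynomial.aeval x).toRingHom = p.map (algebraMap ℝ S) := by
  rw [atS, Polynomial.map_map]
  congr 1
  exact AlgHom.comp_algebraMap (MvPolynomial.aeval x)

lemma map_muS (A B : Polynomial ℝ) (x : Fin 2 → S) :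
    (muS A B).map (MvPolynomial.aeval x).toRingHom = Pmu A B (x 0) := by
  rw [muS, Pmu, Polynomial.map_add, Polynomial.map_mul, Polynomial.map_mul,
    map_atT, map_atS, map_atT, map_atS]

lemma map_nuS (C D : Polynomial ℝ) (x : Fin 2 → S) :
    (nuS C D).map (MvPolynomial.aeval x).toRingHom = Pnu C D (x 0) (x 1) := by
  rw [nuS, Pnu, Polynomial.map_sub, Polynomial.map_sub, Polynomial.map_mul, Polynomial.map_mul,
    Polynomial.map_mul, Polynomial.map_mul, Polynomial.map_C,
    map_atT, map_atS, map_atT, map_atS]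
  congr 2
  simp

end Specialize

section Specialize2

variable {S : Type*} [CommRing S] [Algebra ℝ S]

lemma aeval_res2 (A B C D : Polynomial ℝ) (x : Fin 2 → S) :
    MvPolynomial.aeval x (res2 A B C D)
      = (sylGen (Pmu A B (x 0)) (Pnu C D (x 0) (x 1))
          (muS A B).natDegree (nuS C D).natDegree).det := by
  have h : res2 A B C D
      = (sylGen (muS A B) (nuS C D) (muS A B).natDegree (nuS C D).natDegree).det := rfl
  rw [h]
  have h2 := RingHom.map_det (MvPolynomial.aeval x).toRingHom
    (sylGen (muS A B) (nuS C D) (muS A B).natDegree (nuS C D).natDegree)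
  rw [show (MvPolynomial.aeval x) ((sylGen (muS A B) (nuS C D) (muS A B).natDegree
      (nuS C D).natDegree).det) = (MvPolynomial.aeval x).toRingHom
      ((sylGen (muS A B) (nuS C D) (muS A B).natDegree (nuS C D).natDegree).det) from rfl,
    h2, RingHom.mapMatrix_apply, sylGen_map, map_muS, map_nuS]

lemma natDegree_atS_le (p : Polynomial ℝ) : (atS p).natDegree ≤ p.natDegree :=
  Polynomial.natDegree_map_le

lemma natDegree_muS_le (A B : Polynomial ℝ) :
    (muS A B).natDegree ≤ max A.natDegree B.natDegree := by
  refine le_trans (Polynomial.natDegree_add_le _ _) (max_le ?_ ?_)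
  · exact le_trans (Polynomial.natDegree_C_mul_le _ _)
      (le_trans (natDegree_atS_le B) (le_max_right _ _))
  · refine le_trans (Polynomial.natDegree_mul_le) ?_
    rw [atT, Polynomial.natDegree_C, add_zero]
    exact le_trans (natDegree_atS_le A) (le_max_left _ _)

lemma natDegree_nuS_le (C D : Polynomial ℝ) :
    (nuS C D).natDegree ≤ max C.natDegree D.natDegree := by
  refine le_trans (Polynomial.natDegree_sub_le _ _) (max_le ?_ ?_)
  · refine le_trans (Polynomial.natDegree_sub_le _ _) (max_le ?_ ?_)
    · exact le_trans (Polynomial.natDegree_C_mul_le _ _)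
        (le_trans (natDegree_atS_le D) (le_max_right _ _))
    · refine le_trans (Polynomial.natDegree_mul_le) ?_
      rw [atT, Polynomial.natDegree_C, add_zero]
      exact le_trans (natDegree_atS_le C) (le_max_left _ _)
  · refine le_trans (Polynomial.natDegree_C_mul_le _ _) ?_
    refine le_trans (Polynomial.natDegree_mul_le) ?_
    rw [atT, Polynomial.natDegree_C, zero_add]
    exact le_trans (natDegree_atS_le D) (le_max_right _ _)

lemma natDegree_Pmu_le (A B : Polynomial ℝ) (t : S) :
    (Pmu A B t).natDegree ≤ max A.natDegree B.natDegree := by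
  refine le_trans (Polynomial.natDegree_add_le _ _) (max_le ?_ ?_)
  · exact le_trans (Polynomial.natDegree_C_mul_le _ _)
      (le_trans Polynomial.natDegree_map_le (le_max_right _ _))
  · refine le_trans (Polynomial.natDegree_mul_le) ?_
    rw [Polynomial.natDegree_C, add_zero]
    exact le_trans Polynomial.natDegree_map_le (le_max_left _ _)

lemma natDegree_Pnu_le (C D : Polynomial ℝ) (t k : S) :
    (Pnu C D t k).natDegree ≤ max C.natDegree D.natDegree := by
  refine le_trans (Polynomial.natDegree_sub_le _ _) (max_le ?_ ?_)
  · refine le_trans (Polynomial.natDegree_sub_le _ _) (max_le ?_ ?_)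
    · exact le_trans (Polynomial.natDegree_C_mul_le _ _)
        (le_trans Polynomial.natDegree_map_le (le_max_right _ _))
    · refine le_trans (Polynomial.natDegree_mul_le) ?_
      rw [Polynomial.natDegree_C, add_zero]
      exact le_trans Polynomial.natDegree_map_le (le_max_left _ _)
  · refine le_trans (Polynomial.natDegree_C_mul_le _ _) ?_
    refine le_trans (Polynomial.natDegree_mul_le) ?_
    rw [Polynomial.natDegree_C, zero_add]
    exact le_trans Polynomial.natDegree_map_le (le_max_right _ _)

lemma coeff_Pmu (A B : Polynomial ℝ) (t : S) (j : ℕ) :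
    (Pmu A B t).coeff j = Polynomial.aeval t A * algebraMap ℝ S (B.coeff j)
      + algebraMap ℝ S (A.coeff j) * Polynomial.aeval t B := by
  rw [Pmu, Polynomial.coeff_add, Polynomial.coeff_C_mul, Polynomial.coeff_map, mul_comm
    (A.map (algebraMap ℝ S)) (Polynomial.C (Polynomial.aeval t B)), Polynomial.coeff_C_mul,
    Polynomial.coeff_map]
  ring

lemma coeff_Pnu (C D : Polynomial ℝ) (t k : S) (j : ℕ) :
    (Pnu C D t k).coeff j = Polynomial.aeval t C * algebraMap ℝ S (D.coeff j)
      - algebraMap ℝ S (C.coeff j) * Polynomial.aeval t D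
      - (2 * k + 1) * algebraMap ℝ S Real.pi * (Polynomial.aeval t D * algebraMap ℝ S (D.coeff j)) := by
  rw [Pnu, Polynomial.coeff_sub, Polynomial.coeff_sub, Polynomial.coeff_C_mul,
    Polynomial.coeff_map, mul_comm (C.map (algebraMap ℝ S)) (Polynomial.C (Polynomial.aeval t D)),
    Polynomial.coeff_C_mul, Polynomial.coeff_map, Polynomial.coeff_C_mul, Polynomial.coeff_C_mul,
    Polynomial.coeff_map]
  ring

lemma eval_Pmu (A B : Polynomial ℝ) (t z : S) :
    (Pmu A B t).eval z = Polynomial.aeval t A * Polynomial.aeval z B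
      + Polynomial.aeval z A * Polynomial.aeval t B := by
  simp [Pmu, Polynomial.eval_map, Polynomial.aeval_def]

lemma eval_Pnu (C D : Polynomial ℝ) (t k z : S) :
    (Pnu C D t k).eval z = Polynomial.aeval t C * Polynomial.aeval z D
      - Polynomial.aeval z C * Polynomial.aeval t D
      - (2 * k + 1) * algebraMap ℝ S Real.pi * (Polynomial.aeval t D * Polynomial.aeval z D) := by
  simp [Pnu, Polynomial.eval_map, Polynomial.aeval_def]

lemma aevalOfReal (p : Polynomial ℝ) (t : ℝ) :
    Polynomial.aeval ((t : ℂ)) p = ((p.eval t : ℝ) : ℂ) := by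
  rw [Polynomial.aeval_def, show ((t : ℂ)) = algebraMap ℝ ℂ t from rfl,
    Polynomial.eval₂_at_apply]
  rfl

end Specialize2

lemma sylGen_det_ne_zero' {K : Type*} [Field K] {p q : Polynomial K} {np nq : ℕ}
    (hnp : np = p.natDegree) (hnq : nq = q.natDegree)
    (hp : p ≠ 0) (hq : q ≠ 0) (h : IsCoprime p q) :
    (sylGen p q np nq).det ≠ 0 := by
  subst hnp; subst hnq; exact sylGen_det_ne_zero hp hq h

lemma coprime_indep {K : Type*} [Field K] {A B : Polynomial K} (h : IsCoprime A B)
    (hr : ¬ (A.natDegree = 0 ∧ B.natDegree = 0)) {c₁ c₂ : K}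
    (h0 : Polynomial.C c₁ * A + Polynomial.C c₂ * B = 0) : c₁ = 0 ∧ c₂ = 0 := by
  have hA0 : A ≠ 0 := by
    rintro rfl
    exact hr ⟨Polynomial.natDegree_zero,
      Polynomial.natDegree_eq_zero_of_isUnit (isCoprime_zero_left.1 h)⟩
  have hB0 : B ≠ 0 := by
    rintro rfl
    exact hr ⟨Polynomial.natDegree_eq_zero_of_isUnit (isCoprime_zero_right.1 h),
      Polynomial.natDegree_zero⟩
  by_cases hc2 : c₂ = 0
  · subst hc2
    simp only [map_zero, zero_mul, add_zero] at h0
    rcases mul_eq_zero.1 h0 with h1 | h1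
    · exact ⟨by simpa using (Polynomial.C_eq_zero).1 h1, rfl⟩
    · exact absurd h1 hA0
  · exfalso
    have hCB : Polynomial.C c₂ * B = Polynomial.C (-c₁) * A := by
      rw [Polynomial.C_neg]; linear_combination h0
    have hBeq : B = Polynomial.C (c₂⁻¹ * -c₁) * A := by
      calc B = Polynomial.C (c₂⁻¹ * c₂) * B := by
              rw [inv_mul_cancel₀ hc2, Polynomial.C_1, one_mul]
        _ = Polynomial.C c₂⁻¹ * (Polynomial.C c₂ * B) := by rw [Polynomial.C_mul]; ring
        _ = Polynomial.C c₂⁻¹ * (Polynomial.C (-c₁) * A) := by rw [hCB]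
        _ = Polynomial.C (c₂⁻¹ * -c₁) * A := by rw [Polynomial.C_mul]; ring
    have hdvd : A ∣ B := ⟨Polynomial.C (c₂⁻¹ * -c₁), by rw [hBeq]; ring⟩
    have hAunit : IsUnit A := h.isUnit_of_dvd' dvd_rfl hdvd
    have hAdeg : A.natDegree = 0 := Polynomial.natDegree_eq_zero_of_isUnit hAunit
    have hBdeg : B.natDegree = 0 := by
      rw [hBeq]
      exact Nat.le_zero.1 (le_trans (Polynomial.natDegree_C_mul_le _ _) (le_of_eq hAdeg))
    exact hr ⟨hAdeg, hBdeg⟩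

lemma aeval_congr_of_degreeOf_zero {S : Type*} [CommRing S] [Algebra ℝ S]
    {p : MvPolynomial (Fin 2) ℝ} (h : p.degreeOf 1 = 0) (x y : Fin 2 → S)
    (hxy : x 0 = y 0) : MvPolynomial.aeval x p = MvPolynomial.aeval y p := by
  have hsup : ∀ d ∈ p.support, d 1 = 0 := by
    rw [MvPolynomial.degreeOf_eq_sup] at h
    exact fun d hd => (Finset.sup_eq_bot_iff _ _).1 h d hd
  rw [MvPolynomial.aeval_def, MvPolynomial.aeval_def, MvPolynomial.eval₂_eq,
    MvPolynomial.eval₂_eq]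
  refine Finset.sum_congr rfl (fun d hd => ?_)
  congr 1
  refine Finset.prod_congr rfl (fun i hi => ?_)
  have hne : i ≠ 1 := fun he => (Finsupp.mem_support_iff.1 hi) (he ▸ hsup d hd)
  have hi0 : i = 0 := by
    have h2 := i.isLt
    have hv : (i : ℕ) ≠ 1 := fun hv => hne (Fin.ext hv)
    exact Fin.ext (by omega)
  rw [hi0, hxy]

lemma affine_finite {a c : ℂ} (hc : c ≠ 0) :
    {k : ℝ | a - (2 * (k : ℂ) + 1) * c = 0}.Finite := by
  apply Set.Subsingleton.finite
  intro k1 h1 k2 h2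
  simp only [Set.mem_setOf_eq, sub_eq_zero] at h1 h2
  have h3 : (2 * (k1 : ℂ) + 1) = (2 * (k2 : ℂ) + 1) := mul_right_cancel₀ hc (h1 ▸ h2.symm ▸ rfl)
  have : (k1 : ℂ) = (k2 : ℂ) := by linear_combination h3 / 2
  exact_mod_cast this

lemma aeval_eq_eval_map (p : Polynomial ℝ) (z : ℂ) :
    Polynomial.aeval z p = (p.map (algebraMap ℝ ℂ)).eval z := by
  rw [Polynomial.aeval_def, Polynomial.eval_map]

theorem resultant_mu_nu_nonconstant
    (A B C D : Polynomial ℝ) (hB : B ≠ 0) (hD : D ≠ 0)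
    (hAB : IsCoprime A B) (hCD : IsCoprime C D)
    (hr : ¬ (A.natDegree = 0 ∧ B.natDegree = 0))
    (hθ : ¬ (C.natDegree = 0 ∧ D.natDegree = 0)) :
    res2 A B C D ≠ 0 ∧
    (∀ c : ℝ, res2 A B C D ≠ MvPolynomial.C c) ∧
    ({k : ℤ | ∃ t s : ℝ,
        (B.eval t ≠ 0 ∧ D.eval t ≠ 0) ∧ (B.eval s ≠ 0 ∧ D.eval s ≠ 0) ∧
        A.eval t / B.eval t = -(A.eval s / B.eval s) ∧
        C.eval t / D.eval t = C.eval s / D.eval s + (2 * (k : ℝ) + 1) * Real.pi}.Infinite →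
      0 < (res2 A B C D).degreeOf 1) := by
  classical
  set m := max A.natDegree B.natDegree with hm
  set n := max C.natDegree D.natDegree with hn
  set ι := algebraMap ℝ ℂ with hι
  have hιinj : Function.Injective ι := ι.injective
  set A' := A.map ι with hA'
  set B' := B.map ι with hB'
  set C' := C.map ι with hC'
  set D' := D.map ι with hD'
  have hA0 : A ≠ 0 := by
    rintro rfl
    exact hr ⟨Polynomial.natDegree_zero,
      Polynomial.natDegree_eq_zero_of_isUnit (isCoprime_zero_left.1 hAB)⟩
  have hC0 : C ≠ 0 := by
    rintro rfl
    exact hθ ⟨Polynomial.natDegree_zero,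
      Polynomial.natDegree_eq_zero_of_isUnit (isCoprime_zero_left.1 hCD)⟩
  have hm1 : 1 ≤ m := by
    rcases Nat.eq_zero_or_pos m with h0 | h0
    · exact absurd ⟨by omega, by omega⟩ hr
    · exact h0
  have hn1 : 1 ≤ n := by
    rcases Nat.eq_zero_or_pos n with h0 | h0
    · exact absurd ⟨by omega, by omega⟩ hθ
    · exact h0
  have hab : A.coeff m ≠ 0 ∨ B.coeff m ≠ 0 := by
    rcases le_total A.natDegree B.natDegree with h | h
    · right
      rw [hm, max_eq_right h]
      exact Polynomial.leadingCoeff_ne_zero.2 hB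
    · left
      rw [hm, max_eq_left h]
      exact Polynomial.leadingCoeff_ne_zero.2 hA0
  have hcd : C.coeff n ≠ 0 ∨ D.coeff n ≠ 0 := by
    rcases le_total C.natDegree D.natDegree with h | h
    · right
      rw [hn, max_eq_right h]
      exact Polynomial.leadingCoeff_ne_zero.2 hD
    · left
      rw [hn, max_eq_left h]
      exact Polynomial.leadingCoeff_ne_zero.2 hC0
  -- the real polynomial controlling the leading coefficient of μ
  set f₁ : Polynomial ℝ := Polynomial.C (B.coeff m) * A + Polynomial.C (A.coeff m) * B with hf₁
  have hf₁0 : f₁ ≠ 0 := by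
    intro h0
    obtain ⟨h1, h2⟩ := coprime_indep hAB hr h0
    rcases hab with h3 | h3
    · exact h3 h2
    · exact h3 h1
  have hABc : IsCoprime A' B' := hAB.map (Polynomial.mapRingHom ι)
  have hCDc : IsCoprime C' D' := hCD.map (Polynomial.mapRingHom ι)
  have hB'0 : B' ≠ 0 := Polynomial.map_ne_zero hB
  have hA'0 : A' ≠ 0 := Polynomial.map_ne_zero hA0
  have hD'0 : D' ≠ 0 := Polynomial.map_ne_zero hD
  have hrc : ¬ (A'.natDegree = 0 ∧ B'.natDegree = 0) := by
    rw [hA', hB', Polynomial.natDegree_map_eq_of_injective hιinj,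
      Polynomial.natDegree_map_eq_of_injective hιinj]
    exact hr
  -- nonvanishing of the "cross" polynomial at any complex point
  have hG : ∀ s : ℂ, Polynomial.C (B'.eval s) * A' + Polynomial.C (A'.eval s) * B' ≠ 0 := by
    intro s h0
    obtain ⟨h1, h2⟩ := coprime_indep hABc hrc h0
    obtain ⟨u, v, huv⟩ := hABc
    have := congrArg (Polynomial.eval s) huv
    simp only [Polynomial.eval_add, Polynomial.eval_mul, Polynomial.eval_one, h1, h2,
      mul_zero, add_zero, zero_add] at this
    simp at this
  -- choose a good real point t₀
  set T : Set ℝ := {t | f₁.eval t = 0} ∪ {t | D.eval t = 0} ∪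
      ⋃ s ∈ D'.roots.toFinset, {t : ℝ |
        (Polynomial.C (B'.eval s) * A' + Polynomial.C (A'.eval s) * B').eval ((t : ℝ) : ℂ) = 0}
    with hT
  have hTfin : T.Finite := by
    refine (Set.Finite.union (Set.Finite.union ?_ ?_) ?_)
    · exact Polynomial.finite_setOf_isRoot hf₁0
    · exact Polynomial.finite_setOf_isRoot hD
    · refine Set.Finite.biUnion (D'.roots.toFinset.finite_toSet) (fun s _ => ?_)
      have hfin : {z : ℂ | (Polynomial.C (B'.eval s) * A' + Polynomial.C (A'.eval s) * B').eval z
          = 0}.Finite := Polynomial.finite_setOf_isRoot (hG s)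
      exact Set.Finite.preimage (Complex.ofReal_injective.injOn) hfin
  obtain ⟨t₀, ht₀⟩ := hTfin.infinite_compl.nonempty
  rw [hT] at ht₀
  simp only [Set.mem_compl_iff, Set.mem_union, Set.mem_setOf_eq, Set.mem_iUnion,
    not_or, not_exists] at ht₀
  obtain ⟨⟨ht1, ht2⟩, ht3'⟩ := ht₀
  have ht3 : ∀ s : ℂ, D'.eval s = 0 →
      (Polynomial.C (B'.eval s) * A' + Polynomial.C (A'.eval s) * B').eval ((t₀ : ℝ) : ℂ) ≠ 0 := by
    intro s hs
    have hmem : s ∈ D'.roots.toFinset := by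
      rw [Multiset.mem_toFinset, Polynomial.mem_roots hD'0]
      exact hs
    exact ht3' s hmem
  -- the specialized μ
  set Pμ : Polynomial ℂ := Pmu A B ((t₀ : ℝ) : ℂ) with hPμ
  have hPμcoeffm : Pμ.coeff m = ((f₁.eval t₀ : ℝ) : ℂ) := by
    rw [hPμ, coeff_Pmu, aevalOfReal, aevalOfReal, hf₁]
    simp only [Polynomial.eval_add, Polynomial.eval_mul, Polynomial.eval_C]
    push_cast [hι]
    simp only [Complex.coe_algebraMap]
    ring
  have hPμcm0 : Pμ.coeff m ≠ 0 := by
    rw [hPμcoeffm]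
    exact_mod_cast ht1
  have hPμ0 : Pμ ≠ 0 := fun h => hPμcm0 (by rw [h, Polynomial.coeff_zero])
  have hPμm : Pμ.natDegree = m :=
    le_antisymm (by rw [hPμ, hm]; exact natDegree_Pmu_le A B _)
      (Polynomial.le_natDegree_of_ne_zero hPμcm0)
  have hμmap : (muS A B).map (MvPolynomial.aeval ![((t₀ : ℝ) : ℂ), 0]).toRingHom = Pμ := by
    rw [map_muS, hPμ]
    congr 1
  have hμnd : (muS A B).natDegree = m := by
    refine le_antisymm (by rw [hm]; exact natDegree_muS_le A B) ?_
    calc m = Pμ.natDegree := hPμm.symm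
      _ ≤ (muS A B).natDegree := by rw [← hμmap]; exact Polynomial.natDegree_map_le
  have hroot : ∀ z : ℂ, Pμ.eval z = 0 → D'.eval z ≠ 0 := by
    intro z hz hDz
    apply ht3 z hDz
    rw [hPμ, eval_Pmu] at hz
    simp only [aeval_eq_eval_map, ← hA', ← hB'] at hz
    simp only [Polynomial.eval_add, Polynomial.eval_mul, Polynomial.eval_C]
    linear_combination hz
  -- abbreviations for values at t₀
  set ct : ℂ := ((C.eval t₀ : ℝ) : ℂ) with hct
  set dt : ℂ := ((D.eval t₀ : ℝ) : ℂ) with hdt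
  set cn : ℂ := ((C.coeff n : ℝ) : ℂ) with hcn
  set dn : ℂ := ((D.coeff n : ℝ) : ℂ) with hdn
  have hdt0 : dt ≠ 0 := by rw [hdt]; exact_mod_cast ht2
  have hπ : ((Real.pi : ℝ) : ℂ) ≠ 0 := by exact_mod_cast Real.pi_ne_zero
  -- bad set of k values
  set K1 : Set ℝ := {k : ℝ | (ct * dn - cn * dt)
      - (2 * (k : ℂ) + 1) * (((Real.pi : ℝ) : ℂ) * (dt * dn)) = 0} with hK1
  have hK1fin : K1.Finite := by
    by_cases hdn0 : D.coeff n = 0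
    · have : K1 = ∅ := by
        ext k
        simp only [hK1, Set.mem_setOf_eq, Set.mem_empty_iff_false, iff_false]
        have hcn0 : C.coeff n ≠ 0 := by
          rcases hcd with h | h
          · exact h
          · exact absurd hdn0 h
        rw [hcn, hdn, hdn0]
        push_cast
        simp only [mul_zero, zero_sub, sub_zero, neg_eq_zero]
        intro h0
        rcases mul_eq_zero.1 h0 with h1 | h1
        · exact hcn0 (by exact_mod_cast h1)
        · exact hdt0 h1
      rw [this]; exact Set.finite_empty
    · refine affine_finite ?_
      refine mul_ne_zero hπ (mul_ne_zero hdt0 ?_)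
      rw [hdn]
      exact_mod_cast hdn0
  set K2 : Set ℝ := ⋃ z ∈ Pμ.roots.toFinset, {k : ℝ | (ct * D'.eval z - C'.eval z * dt)
      - (2 * (k : ℂ) + 1) * (((Real.pi : ℝ) : ℂ) * (dt * D'.eval z)) = 0} with hK2
  have hK2fin : K2.Finite := by
    refine Set.Finite.biUnion (Pμ.roots.toFinset.finite_toSet) (fun z hz => ?_)
    have hzroot : Pμ.eval z = 0 := by
      rw [Finset.mem_coe, Multiset.mem_toFinset, Polynomial.mem_roots hPμ0] at hz
      exact hz
    exact affine_finite (mul_ne_zero hπ (mul_ne_zero hdt0 (hroot z hzroot)))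
  obtain ⟨k₁, hk₁⟩ := (hK1fin.union hK2fin).infinite_compl.nonempty
  simp only [Set.mem_compl_iff, Set.mem_union, not_or] at hk₁
  obtain ⟨hk₁1, hk₁2⟩ := hk₁
  -- the specialized ν
  set Pν : Polynomial ℂ := Pnu C D ((t₀ : ℝ) : ℂ) ((k₁ : ℝ) : ℂ) with hPν
  have hPνcoeffn : Pν.coeff n = (ct * dn - cn * dt)
      - (2 * ((k₁ : ℝ) : ℂ) + 1) * (((Real.pi : ℝ) : ℂ) * (dt * dn)) := by
    rw [hPν, coeff_Pnu, aevalOfReal, aevalOfReal, hct, hdt, hcn, hdn]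
    push_cast [hι]
    simp only [Complex.coe_algebraMap]
    ring
  have hPνcn0 : Pν.coeff n ≠ 0 := by
    rw [hPνcoeffn]
    exact fun h => hk₁1 h
  have hPν0 : Pν ≠ 0 := fun h => hPνcn0 (by rw [h, Polynomial.coeff_zero])
  have hPνn : Pν.natDegree = n :=
    le_antisymm (by rw [hPν, hn]; exact natDegree_Pnu_le C D _ _)
      (Polynomial.le_natDegree_of_ne_zero hPνcn0)
  have hνmap : (nuS C D).map
      (MvPolynomial.aeval ![((t₀ : ℝ) : ℂ), ((k₁ : ℝ) : ℂ)]).toRingHom = Pν := by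
    rw [map_nuS, hPν]
    congr 1
  have hνnd : (nuS C D).natDegree = n := by
    refine le_antisymm (by rw [hn]; exact natDegree_nuS_le C D) ?_
    calc n = Pν.natDegree := hPνn.symm
      _ ≤ (nuS C D).natDegree := by rw [← hνmap]; exact Polynomial.natDegree_map_le
  -- coprimality of the specialized polynomials
  have hcop : IsCoprime Pμ Pν := by
    rw [Polynomial.isCoprime_iff_aeval_ne_zero_of_isAlgClosed (k := ℂ) (K := ℂ)]
    intro z
    by_cases hz : Pμ.eval z = 0
    · right
      rw [Polynomial.coe_aeval_eq_eval]
      intro h0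
      have hzmem : z ∈ Pμ.roots.toFinset := by
        rw [Multiset.mem_toFinset, Polynomial.mem_roots hPμ0]
        exact hz
      apply hk₁2
      rw [hK2]
      simp only [Set.mem_iUnion, Set.mem_setOf_eq]
      refine ⟨z, hzmem, ?_⟩
      rw [hPν, eval_Pnu] at h0
      simp only [aevalOfReal] at h0
      simp only [aeval_eq_eval_map, ← hC', ← hD'] at h0
      have hπalg : algebraMap ℝ ℂ Real.pi = ((Real.pi : ℝ) : ℂ) := rfl
      rw [hπalg, ← hct, ← hdt] at h0
      linear_combination h0
    · left
      rw [Polynomial.coe_aeval_eq_eval]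
      exact hz
  -- the first evaluation is nonzero
  have hdet1 : (MvPolynomial.aeval ![((t₀ : ℝ) : ℂ), ((k₁ : ℝ) : ℂ)]) (res2 A B C D) ≠ 0 := by
    rw [aeval_res2]
    simp only [Matrix.cons_val_zero, Matrix.cons_val_one, Matrix.head_cons]
    rw [← hPμ, ← hPν]
    exact sylGen_det_ne_zero' (hμnd.trans hPμm.symm) (hνnd.trans hPνn.symm) hPμ0 hPν0 hcop
  have hne : res2 A B C D ≠ 0 := fun h => hdet1 (by rw [h, map_zero])
  -- positivity of the degree in k
  have hdegk : 0 < (res2 A B C D).degreeOf 1 := by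
    by_contra hdeg
    have h0 : (res2 A B C D).degreeOf 1 = 0 := by omega
    obtain ⟨z₀, hz₀⟩ := Complex.exists_root (f := Pμ)
      (by rw [Polynomial.degree_eq_natDegree hPμ0, hPμm]; exact_mod_cast hm1)
    have hz₀' : Pμ.eval z₀ = 0 := hz₀
    have hDz₀ : D'.eval z₀ ≠ 0 := hroot z₀ hz₀'
    set az : ℂ := ct * D'.eval z₀ - C'.eval z₀ * dt with haz
    set cz : ℂ := ((Real.pi : ℝ) : ℂ) * (dt * D'.eval z₀) with hcz
    have hcz0 : cz ≠ 0 := mul_ne_zero hπ (mul_ne_zero hdt0 hDz₀)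
    set k₂ : ℂ := (az / cz - 1) / 2 with hk₂
    have h2k : 2 * k₂ + 1 = az / cz := by rw [hk₂]; ring
    have hν2 : (Pnu C D ((t₀ : ℝ) : ℂ) k₂).eval z₀ = 0 := by
      rw [eval_Pnu]
      simp only [aevalOfReal]
      simp only [aeval_eq_eval_map, ← hC', ← hD']
      have hπalg : algebraMap ℝ ℂ Real.pi = ((Real.pi : ℝ) : ℂ) := rfl
      rw [hπalg, ← hct, ← hdt]
      have hmain : (2 * k₂ + 1) * (((Real.pi : ℝ) : ℂ) * (dt * D'.eval z₀)) = az := by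
        rw [h2k, ← hcz, div_mul_cancel₀ _ hcz0]
      calc ct * D'.eval z₀ - C'.eval z₀ * dt
            - (2 * k₂ + 1) * ((Real.pi : ℝ) : ℂ) * (dt * D'.eval z₀)
          = az - (2 * k₂ + 1) * (((Real.pi : ℝ) : ℂ) * (dt * D'.eval z₀)) := by
            rw [haz]; ring
        _ = az - az := by rw [hmain]
        _ = 0 := sub_self az
    have hdet2 : (MvPolynomial.aeval ![((t₀ : ℝ) : ℂ), k₂]) (res2 A B C D) = 0 := by
      rw [aeval_res2]
      simp only [Matrix.cons_val_zero, Matrix.cons_val_one, Matrix.head_cons]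
      refine sylGen_det_eq_zero ?_ ?_ ?_ (x := z₀) ?_ ?_
      · rw [hμnd, ← hPμm, ← hPμ]
      · rw [hνnd, hn]; exact natDegree_Pnu_le C D _ _
      · rw [hμnd]; omega
      · rw [← hPμ]; exact hz₀'
      · exact hν2
    apply hdet1
    rw [aeval_congr_of_degreeOf_zero h0 ![((t₀ : ℝ) : ℂ), ((k₁ : ℝ) : ℂ)]
      ![((t₀ : ℝ) : ℂ), k₂] (by simp), hdet2]
  refine ⟨hne, fun c hc => ?_, fun _ => hdegk⟩
  rw [hc, MvPolynomial.degreeOf_C] at hdegk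
  omega
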